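/- For every m ≥ 1, every word A^(m) = (A₁,…,A_m) ∈ 𝒜^m, and every x ∈ [0,1], the composed inverse branch satisfies |h_{A^(m)}'(x)| ≤ 4^{−m}. In particular, for every single digit (a,ε)_s ∈ 𝒜 and x ∈ [0,1], |h_{(a,ε)_s}'(x)| ≤ 1/4. -/

import Mathlib

open MeasureTheory Real Set Filter Topology

namespace SCF

/-- The involution `ι(x) = (1−x)/(1+x)`. -/
noncomputable def iota (x : ℝ) : ℝ := (1 - x) / (1 + x)

/-- Even continued-fraction step.  For `y ∈ (0,1/2]` one has
`⌊(1/y+1)/2⌋ = k` whenever `1/y ∈ (2k−1, 2k+1)`, so `Te y = |1/y − 2k|`;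
explicitly `Te y = 1/y − 2` on `[1/3,1/2]`, `Te y = 1/y − 2k` on
`[1/(2k+1), 1/(2k))` and `Te y = 2k − 1/y` on `[1/(2k), 1/(2k−1))` (`k ≥ 2`). -/
noncomputable def Te (y : ℝ) : ℝ := |1 / y - 2 * (⌊(1 / y + 1) / 2⌋ : ℝ)|

/-- The spliced continued fraction (SCF) map `T : [0,1] → [0,1]`, with
`T 0 = 0`, `T 1 = 1`.  On `(0,1/2]` it is the even continued fraction map
(see `Te`), and on `(1/2,1)` it is the odd–odd map, which is the conjugate
`ι ∘ Te ∘ ι` of the even map; this agrees with the branchwise definition: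
`T x = (k x − (k−1))/(k − (k+1) x)` on `((k−1)/k, (2k−1)/(2k+1)]` and
`T x = (k − (k+1) x)/(k x − (k−1))` on `((2k−1)/(2k+1), k/(k+1)]` for `k ≥ 2`. -/
noncomputable def T (x : ℝ) : ℝ :=
  if x ≤ 0 then 0
  else if 1 ≤ x then 1
  else if x ≤ 1 / 2 then Te x
  else iota (Te (iota x))

/-- Parity label of a digit: `e` (even cusp) or `o` (odd–odd cusp). -/
inductive Par | e | o
deriving DecidableEq

/-- A candidate SCF digit `(a, ε)_s`. -/
structure Digit where
  a : ℤ
  eps : ℤ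
  s : Par
deriving DecidableEq

/-- The digit set `𝒜 = {(k,ε)_s : k ≥ 2, ε = ±1, s ∈ {e,o}} ∪ {(1,+1)_e}`. -/
def Digit.Valid (d : Digit) : Prop :=
  (2 ≤ d.a ∧ (d.eps = 1 ∨ d.eps = -1)) ∨ (d.a = 1 ∧ d.eps = 1 ∧ d.s = Par.e)

/-- The branch intervals `I_{(a,ε)_s}` of the SCF map. -/
noncomputable def branch (d : Digit) : Set ℝ :=
  match d.s with
  | Par.e =>
      if d.a = 1 then Set.Icc (1/3 : ℝ) (1/2)
      else if d.eps = 1 then Set.Ico (1 / (2 * (d.a : ℝ) + 1)) (1 / (2 * (d.a : ℝ)))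
      else Set.Ico (1 / (2 * (d.a : ℝ))) (1 / (2 * (d.a : ℝ) - 1))
  | Par.o =>
      if d.eps = 1 then
        Set.Ioc ((2 * (d.a : ℝ) - 1) / (2 * (d.a : ℝ) + 1)) ((d.a : ℝ) / ((d.a : ℝ) + 1))
      else
        Set.Ioc (((d.a : ℝ) - 1) / (d.a : ℝ)) ((2 * (d.a : ℝ) - 1) / (2 * (d.a : ℝ) + 1))

open Classical in
/-- The SCF digit of a point `y` (the unique valid digit `d` with `y ∈ I_d`;
well defined for every `y ∈ (0,1)`). -/
noncomputable def digit (y : ℝ) : Digit :=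
  if h : ∃ d : Digit, d.Valid ∧ y ∈ branch d then h.choose else ⟨1, 1, Par.e⟩

/-- The `n`-th SCF digit `(a_n(x), ε_n(x))_{s_n(x)}` of `x`, `n ≥ 1`,
determined by `T^[n−1] x ∈ I_{(a_n,ε_n)_{s_n}}`. -/
noncomputable def dig (n : ℕ) (x : ℝ) : Digit := digit (T^[n - 1] x)

/-- The `n`-th SCF partial quotient `a_n(x)`. -/
noncomputable def a (n : ℕ) (x : ℝ) : ℤ := (dig n x).a

/-- The invariant density `f_μ`. -/
noncomputable def fdens (x : ℝ) : ℝ :=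
  2 / (Real.log (2 + Real.sqrt 3) * (1 - (2 - Real.sqrt 3) * x) * (1 + Real.sqrt 3 * x))

/-- The absolutely continuous `T`-invariant probability measure `μ` on `(0,1)`. -/
noncomputable def mu : Measure ℝ :=
  (volume.restrict (Set.Ioo (0 : ℝ) 1)).withDensity fun x => ENNReal.ofReal (fdens x)

/-- The inverse branches `h_{(a,ε)_s}` of the SCF map `T`. -/
noncomputable def h (d : Digit) (x : ℝ) : ℝ :=
  match d.s with
  | Par.e => 1 / (2 * (d.a : ℝ) + (d.eps : ℝ) * x)
  | Par.o =>
      if d.eps = 1 then (((d.a : ℝ) - 1) * x + (d.a : ℝ)) / ((d.a : ℝ) * x + ((d.a : ℝ) + 1))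
      else ((d.a : ℝ) * x + ((d.a : ℝ) - 1)) / (((d.a : ℝ) + 1) * x + (d.a : ℝ))

/-- Composed inverse branch `h_{A^{(n)}} = h_{A₁} ∘ ⋯ ∘ h_{A_n}` of a word. -/
noncomputable def hWord (l : List Digit) : ℝ → ℝ :=
  l.foldr (fun d g => h d ∘ g) id

/-- The dual inverse branches `bar h_{(b,η)_t}`. -/
noncomputable def hbar (d : Digit) (y : ℝ) : ℝ :=
  match d.s with
  | Par.e => (d.eps : ℝ) / (2 * (d.a : ℝ) + y)
  | Par.o =>
      1 / (1 + (d.eps : ℝ) / (((d.a : ℝ) - ((max 0 d.eps : ℤ) : ℝ)) + 1 / (1 + y)))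

/-- The matrix `M_{(a,ε)_s}` associated with the inverse branch `h_{(a,ε)_s}`. -/
noncomputable def Mdig (d : Digit) : Matrix (Fin 2) (Fin 2) ℝ :=
  match d.s with
  | Par.e => !![0, 1; (d.eps : ℝ), 2 * (d.a : ℝ)]
  | Par.o =>
      !![(d.a : ℝ) - ((max 0 d.eps : ℤ) : ℝ), (d.a : ℝ) - ((max 0 d.eps : ℤ) : ℝ) + (d.eps : ℝ);
         (d.a : ℝ) - ((max 0 d.eps : ℤ) : ℝ) + 1, (d.a : ℝ) - ((max 0 d.eps : ℤ) : ℝ) + (d.eps : ℝ) + 1]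

/-- `M_n(x) = M_{(a₁,ε₁)_{s₁}} ⋯ M_{(a_n,ε_n)_{s_n}}`. -/
noncomputable def Mn (n : ℕ) (x : ℝ) : Matrix (Fin 2) (Fin 2) ℝ :=
  ((List.range n).map fun i => Mdig (digit (T^[i] x))).prod

/-- `P_n(x)`: the `(1,2)`-entry of `M_n(x)` (numerator of the `n`-th convergent). -/
noncomputable def Pc (n : ℕ) (x : ℝ) : ℝ := Mn n x 0 1

/-- `Q_n(x)`: the `(2,2)`-entry of `M_n(x)` (denominator of the `n`-th convergent). -/
noncomputable def Qc (n : ℕ) (x : ℝ) : ℝ := Mn n x 1 1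


private lemma key (d : Digit) (hd : d.Valid) (x : ℝ) (hx : x ∈ Set.Icc (0:ℝ) 1) :
    ∃ D, HasDerivAt (h d) D x ∧ |D| ≤ 1/4 ∧ h d x ∈ Set.Icc (0:ℝ) 1 := by
  obtain ⟨hx0, hx1⟩ := hx
  obtain ⟨a, eps, s⟩ := d
  cases s with
  | e =>
    have hc : (2:ℝ) ≤ 2*(a:ℝ) + (eps:ℝ)*x := by
      rcases hd with ⟨h2, h3⟩ | ⟨h1, h2', _⟩
      · have h2' : (2:ℝ) ≤ (a:ℝ) := by exact_mod_cast h2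
        rcases h3 with he | he <;> subst he <;> push_cast <;> nlinarith
      · subst h1; subst h2'; push_cast; linarith
    have heps : |(eps:ℝ)| = 1 := by
      rcases hd with ⟨_, h3⟩ | ⟨_, h2', _⟩
      · rcases h3 with he | he <;> subst he <;> norm_num
      · subst h2'; norm_num
    have hne : 2*(a:ℝ) + (eps:ℝ)*x ≠ 0 := by linarith
    have hden : HasDerivAt (fun y : ℝ => 2*(a:ℝ) + (eps:ℝ)*y) (eps:ℝ) x := by
      simpa using ((hasDerivAt_id x).const_mul (eps:ℝ)).const_add (2*(a:ℝ))
    refine ⟨-(eps:ℝ)/(2*(a:ℝ) + (eps:ℝ)*x)^2, ?_, ?_, ?_⟩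
    · have hfun : h ⟨a, eps, Par.e⟩ = fun y : ℝ => 1/(2*(a:ℝ) + (eps:ℝ)*y) := rfl
      rw [hfun]
      have h' := hden.inv hne
      simp only [one_div]
      exact h'
    · have h4 : (4:ℝ) ≤ (2*(a:ℝ) + (eps:ℝ)*x)^2 := by nlinarith
      rw [abs_div, abs_neg, heps, abs_of_nonneg (by positivity : (0:ℝ) ≤ (2*(a:ℝ) + (eps:ℝ)*x)^2)]
      rw [div_le_div_iff₀ (by positivity) (by norm_num)]
      linarith
    · simp only [h]
      constructor
      · positivity
      · rw [div_le_one (by linarith)]; linarith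
  | o =>
    have hd' : (2:ℤ) ≤ a ∧ (eps = 1 ∨ eps = -1) := by
      rcases hd with h' | ⟨_, _, hse⟩
      · exact h'
      · exact absurd hse (by simp)
    obtain ⟨ha2, heps⟩ := hd'
    have ha2' : (2:ℝ) ≤ (a:ℝ) := by exact_mod_cast ha2
    rcases heps with he | he <;> subst he
    · -- eps = 1 : h x = ((a-1)x + a)/(a x + (a+1))
      have hdpos : (0:ℝ) < (a:ℝ)*x + ((a:ℝ)+1) := by nlinarith
      have hne : (a:ℝ)*x + ((a:ℝ)+1) ≠ 0 := ne_of_gt hdpos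
      have hnum : HasDerivAt (fun y : ℝ => ((a:ℝ)-1)*y + (a:ℝ)) ((a:ℝ)-1) x := by
        simpa using ((hasDerivAt_id x).const_mul ((a:ℝ)-1)).add_const (a:ℝ)
      have hden : HasDerivAt (fun y : ℝ => (a:ℝ)*y + ((a:ℝ)+1)) (a:ℝ) x := by
        simpa using ((hasDerivAt_id x).const_mul (a:ℝ)).add_const ((a:ℝ)+1)
      refine ⟨(((a:ℝ)-1)*((a:ℝ)*x + ((a:ℝ)+1)) - (((a:ℝ)-1)*x + (a:ℝ))*(a:ℝ)) / ((a:ℝ)*x + ((a:ℝ)+1))^2, ?_, ?_, ?_⟩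
      · have hfun : h ⟨a, 1, Par.o⟩ = fun y : ℝ => (((a:ℝ)-1)*y + (a:ℝ)) / ((a:ℝ)*y + ((a:ℝ)+1)) := by
          funext y; simp [h]
        rw [hfun]
        exact hnum.div hden hne
      · rw [show (((a:ℝ)-1)*((a:ℝ)*x + ((a:ℝ)+1)) - (((a:ℝ)-1)*x + (a:ℝ))*(a:ℝ)) = -1 by ring]
        have h3 : (3:ℝ) ≤ (a:ℝ)*x + ((a:ℝ)+1) := by nlinarith
        have h4 : (4:ℝ) ≤ ((a:ℝ)*x + ((a:ℝ)+1))^2 := by nlinarith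
        rw [abs_div, abs_neg, abs_one, abs_of_nonneg (by positivity : (0:ℝ) ≤ ((a:ℝ)*x + ((a:ℝ)+1))^2)]
        rw [div_le_div_iff₀ (by positivity) (by norm_num)]
        linarith
      · have hfun : h ⟨a, 1, Par.o⟩ x = (((a:ℝ)-1)*x + (a:ℝ)) / ((a:ℝ)*x + ((a:ℝ)+1)) := by
          simp [h]
        rw [hfun]
        constructor
        · apply div_nonneg _ (le_of_lt hdpos); nlinarith
        · rw [div_le_one hdpos]; nlinarith
    · -- eps = -1 : h x = (a x + (a-1))/((a+1)x + a)
      have hdpos : (0:ℝ) < ((a:ℝ)+1)*x + (a:ℝ) := by nlinarith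
      have hne : ((a:ℝ)+1)*x + (a:ℝ) ≠ 0 := ne_of_gt hdpos
      have hnum : HasDerivAt (fun y : ℝ => (a:ℝ)*y + ((a:ℝ)-1)) (a:ℝ) x := by
        simpa using ((hasDerivAt_id x).const_mul (a:ℝ)).add_const ((a:ℝ)-1)
      have hden : HasDerivAt (fun y : ℝ => ((a:ℝ)+1)*y + (a:ℝ)) ((a:ℝ)+1) x := by
        simpa using ((hasDerivAt_id x).const_mul ((a:ℝ)+1)).add_const (a:ℝ)
      refine ⟨((a:ℝ)*(((a:ℝ)+1)*x + (a:ℝ)) - ((a:ℝ)*x + ((a:ℝ)-1))*((a:ℝ)+1)) / (((a:ℝ)+1)*x + (a:ℝ))^2, ?_, ?_, ?_⟩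
      · have hfun : h ⟨a, -1, Par.o⟩ = fun y : ℝ => ((a:ℝ)*y + ((a:ℝ)-1)) / (((a:ℝ)+1)*y + (a:ℝ)) := by
          funext y; norm_num [h]
        rw [hfun]
        exact hnum.div hden hne
      · rw [show ((a:ℝ)*(((a:ℝ)+1)*x + (a:ℝ)) - ((a:ℝ)*x + ((a:ℝ)-1))*((a:ℝ)+1)) = 1 by ring]
        have h3 : (2:ℝ) ≤ ((a:ℝ)+1)*x + (a:ℝ) := by nlinarith
        have h4 : (4:ℝ) ≤ (((a:ℝ)+1)*x + (a:ℝ))^2 := by nlinarith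
        rw [abs_div, abs_one, abs_of_nonneg (by positivity : (0:ℝ) ≤ (((a:ℝ)+1)*x + (a:ℝ))^2)]
        rw [div_le_div_iff₀ (by positivity) (by norm_num)]
        linarith
      · have hfun : h ⟨a, -1, Par.o⟩ x = ((a:ℝ)*x + ((a:ℝ)-1)) / (((a:ℝ)+1)*x + (a:ℝ)) := by
          norm_num [h]
        rw [hfun]
        constructor
        · apply div_nonneg _ (le_of_lt hdpos); nlinarith
        · rw [div_le_one hdpos]; nlinarith

private lemma word_key (l : List Digit) (hl : ∀ d ∈ l, d.Valid) (x : ℝ)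
    (hx : x ∈ Set.Icc (0:ℝ) 1) :
    ∃ D, HasDerivAt (hWord l) D x ∧ |D| ≤ (1/4 : ℝ) ^ l.length ∧
      hWord l x ∈ Set.Icc (0:ℝ) 1 := by
  induction l generalizing x with
  | nil => exact ⟨1, hasDerivAt_id x, by norm_num, hx⟩
  | cons d l ih =>
    obtain ⟨D, hD, hDle, hmem⟩ := ih (fun e he => hl e (List.mem_cons_of_mem _ he)) x hx
    obtain ⟨E, hE, hEle, hmem'⟩ := key d (hl d List.mem_cons_self) _ hmem
    refine ⟨E * D, ?_, ?_, ?_⟩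
    · exact hE.comp x hD
    · rw [abs_mul, List.length_cons, pow_succ]
      rw [mul_comm ((1/4:ℝ)^l.length) (1/4)]
      exact mul_le_mul hEle hDle (abs_nonneg _) (by norm_num)
    · exact hmem'

/-- uniform contraction `|h_{A^{(m)}}'| ≤ 4^{−m}` on `[0,1]`;
in particular every single inverse branch has `|h'| ≤ 1/4`. -/
theorem uniform_contraction :
    (∀ l : List Digit, l ≠ [] → (∀ d ∈ l, d.Valid) →
      ∀ x ∈ Set.Icc (0 : ℝ) 1, |deriv (hWord l) x| ≤ (1/4 : ℝ) ^ l.length) ∧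
    (∀ d : Digit, d.Valid →
      ∀ x ∈ Set.Icc (0 : ℝ) 1, |deriv (h d) x| ≤ 1/4) := by
  constructor
  · intro l _ hl x hx
    obtain ⟨D, hD, hDle, _⟩ := word_key l hl x hx
    rwa [hD.deriv]
  · intro d hd x hx
    obtain ⟨D, hD, hDle, _⟩ := key d hd x hx
    rwa [hD.deriv]

end SCF
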